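/- Let a, b, σ² be real numbers with 0 < a ≤ 1/2, b > 0, and σ² > 0. Then the NBP marginal density β ↦ g(β | σ²) = (Γ(a+b)/(Γ(a)Γ(b))) ∫_0^∞ (2πσ²t)^{-1/2} exp(−β²/(2σ²t)) t^{a−1} (1+t)^{−(a+b)} dt tends to +∞ as β → 0. In particular, the marginal density of a coefficient under the normal–beta prime prior is unbounded with a singularity at zero whenever 0 < a ≤ 1/2. -/

import Mathlib

open Real MeasureTheory Filter Topology Set

private lemma nbp_cont (a b σ2 β : ℝ) (hσ2 : 0 < σ2) :
    ContinuousOn (fun t : ℝ =>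
      (2 * π * σ2 * t) ^ (-(1 / 2 : ℝ)) * Real.exp (-β ^ 2 / (2 * σ2 * t)) *
        t ^ (a - 1) * (1 + t) ^ (-(a + b))) (Ioi 0) := by
  refine ContinuousOn.mul (ContinuousOn.mul (ContinuousOn.mul ?_ ?_) ?_) ?_
  · exact (continuousOn_const.mul continuousOn_id).rpow_const
      (fun t ht => Or.inl (by have h0 : (0:ℝ) < t := ht; have := pi_pos; show 2 * π * σ2 * t ≠ 0; positivity))
  · exact Real.continuous_exp.comp_continuousOn
      (continuousOn_const.div (continuousOn_const.mul continuousOn_id)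
        (fun t ht => by have h0 : (0:ℝ) < t := ht; positivity))
  · exact continuousOn_id.rpow_const (fun t ht => Or.inl (ne_of_gt ht))
  · exact (continuousOn_const.add continuousOn_id).rpow_const
      (fun t ht => Or.inl (by have h0 : (0:ℝ) < t := ht; show 1 + t ≠ 0; positivity))

private lemma nbp_nonneg (a b σ2 β : ℝ) (hσ2 : 0 < σ2) {t : ℝ} (ht : 0 < t) :
    0 ≤ (2 * π * σ2 * t) ^ (-(1 / 2 : ℝ)) * Real.exp (-β ^ 2 / (2 * σ2 * t)) *
        t ^ (a - 1) * (1 + t) ^ (-(a + b)) := by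
  have := pi_pos
  positivity

private lemma nbp_integrableOn (a b σ2 β : ℝ) (ha : 0 < a) (ha' : a ≤ 1 / 2) (hb : 0 < b)
    (hσ2 : 0 < σ2) (hβ : β ≠ 0) :
    IntegrableOn (fun t : ℝ =>
      (2 * π * σ2 * t) ^ (-(1 / 2 : ℝ)) * Real.exp (-β ^ 2 / (2 * σ2 * t)) *
        t ^ (a - 1) * (1 + t) ^ (-(a + b))) (Ioi 0) := by
  have hπ := pi_pos
  have hA : (0:ℝ) < 2 * π * σ2 := by positivity
  set c : ℝ := β ^ 2 / (2 * σ2) with hcdef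
  have hc : 0 < c := by positivity
  have key : ∀ t : ℝ, 0 < t →
      (2 * π * σ2 * t) ^ (-(1 / 2 : ℝ)) * Real.exp (-β ^ 2 / (2 * σ2 * t)) *
        t ^ (a - 1) * (1 + t) ^ (-(a + b))
      = (2 * π * σ2) ^ (-(1 / 2 : ℝ)) * (t ^ (-(1/2:ℝ)) * t ^ (a - 1)) *
          Real.exp (-(c / t)) * (1 + t) ^ (-(a + b)) := by
    intro t ht
    rw [Real.mul_rpow hA.le ht.le]
    have : -β ^ 2 / (2 * σ2 * t) = -(c / t) := by
      field_simp
      rw [hcdef]; field_simp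
    rw [this]; ring
  have hIoc : IntegrableOn (fun t : ℝ =>
      (2 * π * σ2 * t) ^ (-(1 / 2 : ℝ)) * Real.exp (-β ^ 2 / (2 * σ2 * t)) *
        t ^ (a - 1) * (1 + t) ^ (-(a + b))) (Ioc 0 1) := by
    have hdom : IntegrableOn (fun t : ℝ =>
        (2 * π * σ2) ^ (-(1 / 2 : ℝ)) / c * t ^ (a - 1/2)) (Ioc 0 1) := by
      have := (intervalIntegral.intervalIntegrable_rpow' (a := 0) (b := 1)
        (r := a - 1/2) (by linarith))
      rw [intervalIntegrable_iff_integrableOn_Ioc_of_le (by norm_num)] at this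
      exact this.const_mul _
    refine Integrable.mono' hdom
      (((nbp_cont a b σ2 β hσ2).mono Ioc_subset_Ioi_self).aestronglyMeasurable
        measurableSet_Ioc) ?_
    filter_upwards [ae_restrict_mem measurableSet_Ioc] with t ht
    obtain ⟨ht0, ht1⟩ := ht
    rw [Real.norm_of_nonneg (nbp_nonneg a b σ2 β hσ2 ht0), key t ht0]
    have hexp : Real.exp (-(c / t)) ≤ t / c := by
      rw [Real.exp_neg]
      have h1 : c / t ≤ Real.exp (c / t) := by
        have := Real.add_one_le_exp (c / t); linarith
      have h2 : (Real.exp (c / t))⁻¹ ≤ (c / t)⁻¹ :=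
        inv_anti₀ (by positivity) h1
      rwa [inv_div] at h2
    have hone : (1 + t) ^ (-(a + b)) ≤ 1 :=
      Real.rpow_le_one_of_one_le_of_nonpos (by linarith) (by linarith)
    calc (2 * π * σ2) ^ (-(1 / 2 : ℝ)) * (t ^ (-(1/2:ℝ)) * t ^ (a - 1)) *
          Real.exp (-(c / t)) * (1 + t) ^ (-(a + b))
        ≤ (2 * π * σ2) ^ (-(1 / 2 : ℝ)) * (t ^ (-(1/2:ℝ)) * t ^ (a - 1)) *
          (t / c) * 1 := by gcongr <;> positivity
      _ = (2 * π * σ2) ^ (-(1 / 2 : ℝ)) / c * (t ^ (-(1/2:ℝ)) * t ^ (a - 1) * t ^ (1:ℝ)) := by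
          rw [Real.rpow_one]; ring
      _ = (2 * π * σ2) ^ (-(1 / 2 : ℝ)) / c * t ^ (a - 1/2) := by
          rw [← Real.rpow_add ht0, ← Real.rpow_add ht0]; ring_nf
  have hIoi : IntegrableOn (fun t : ℝ =>
      (2 * π * σ2 * t) ^ (-(1 / 2 : ℝ)) * Real.exp (-β ^ 2 / (2 * σ2 * t)) *
        t ^ (a - 1) * (1 + t) ^ (-(a + b))) (Ioi 1) := by
    have hdom : IntegrableOn (fun t : ℝ =>
        (2 * π * σ2) ^ (-(1 / 2 : ℝ)) * t ^ (-(3/2:ℝ) - b)) (Ioi 1) :=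
      (integrableOn_Ioi_rpow_of_lt (by linarith) one_pos).const_mul _
    refine Integrable.mono' hdom
      (((nbp_cont a b σ2 β hσ2).mono (Ioi_subset_Ioi zero_le_one)).aestronglyMeasurable
        measurableSet_Ioi) ?_
    filter_upwards [ae_restrict_mem measurableSet_Ioi] with t ht
    have ht0 : (0:ℝ) < t := lt_trans one_pos ht
    rw [Real.norm_of_nonneg (nbp_nonneg a b σ2 β hσ2 ht0), key t ht0]
    have hexp : Real.exp (-(c / t)) ≤ 1 :=
      Real.exp_le_one_iff.2 (neg_nonpos_of_nonneg (by positivity))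
    have hone : (1 + t) ^ (-(a + b)) ≤ t ^ (-(a + b)) :=
      Real.rpow_le_rpow_of_nonpos ht0 (by linarith) (by linarith)
    calc (2 * π * σ2) ^ (-(1 / 2 : ℝ)) * (t ^ (-(1/2:ℝ)) * t ^ (a - 1)) *
          Real.exp (-(c / t)) * (1 + t) ^ (-(a + b))
        ≤ (2 * π * σ2) ^ (-(1 / 2 : ℝ)) * (t ^ (-(1/2:ℝ)) * t ^ (a - 1)) *
          1 * t ^ (-(a + b)) := by gcongr <;> positivity
      _ = (2 * π * σ2) ^ (-(1 / 2 : ℝ)) * (t ^ (-(1/2:ℝ)) * t ^ (a - 1) * t ^ (-(a+b))) := by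
          ring
      _ = (2 * π * σ2) ^ (-(1 / 2 : ℝ)) * t ^ (-(3/2:ℝ) - b) := by
          rw [← Real.rpow_add ht0, ← Real.rpow_add ht0]; ring_nf
  have : Ioc (0:ℝ) 1 ∪ Ioi 1 = Ioi 0 := Ioc_union_Ioi_eq_Ioi (by norm_num)
  rw [← this]
  exact hIoc.union hIoi

/-- The NBP marginal density `β ↦ g(β | σ²)` tends to `+∞` as `β → 0`
whenever `0 < a ≤ 1/2`, `b > 0`, `σ² > 0`. -/
theorem nbp_marginal_tendsto_atTop_at_zero
    (a b σ2 : ℝ) (ha : 0 < a) (ha' : a ≤ 1 / 2) (hb : 0 < b) (hσ2 : 0 < σ2) :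
    Tendsto (fun β : ℝ =>
        (Real.Gamma (a + b) / (Real.Gamma a * Real.Gamma b)) *
          ∫ t in Set.Ioi (0 : ℝ),
            (2 * π * σ2 * t) ^ (-(1 / 2 : ℝ)) * Real.exp (-β ^ 2 / (2 * σ2 * t)) *
              t ^ (a - 1) * (1 + t) ^ (-(a + b)))
      (𝓝[≠] (0 : ℝ)) atTop := by
  have hπ := pi_pos
  set C : ℝ := Real.Gamma (a + b) / (Real.Gamma a * Real.Gamma b) with hCdef
  have hC : 0 < C := div_pos (Real.Gamma_pos_of_pos (by linarith))
    (mul_pos (Real.Gamma_pos_of_pos ha) (Real.Gamma_pos_of_pos hb))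
  set K : ℝ := (2 * π * σ2) ^ (-(1 / 2 : ℝ)) * Real.exp (-(1/2:ℝ)) * (2:ℝ) ^ (-(a + b))
    with hKdef
  have hK : 0 < K := by positivity
  rw [tendsto_atTop]
  intro M
  set R : ℝ := max 1 (M / (C * K)) with hRdef
  have hR : 0 < R := lt_of_lt_of_le one_pos (le_max_left _ _)
  set δ : ℝ := Real.exp (-R) with hδdef
  have hδ : 0 < δ := Real.exp_pos _
  have hδ1 : δ ≤ 1 := Real.exp_le_one_iff.2 (by linarith)
  rw [eventually_nhdsWithin_iff, Metric.eventually_nhds_iff]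
  refine ⟨Real.sqrt (σ2 * δ), Real.sqrt_pos.2 (by positivity), fun {β} hβd hβne => ?_⟩
  have hβ0 : β ≠ 0 := hβne
  rw [Real.dist_eq, sub_zero] at hβd
  have hβ2 : β ^ 2 < σ2 * δ := by
    have := (Real.lt_sqrt (abs_nonneg β)).1 hβd
    calc β ^ 2 = |β| ^ 2 := (sq_abs β).symm
      _ < σ2 * δ := this
  have hInt := nbp_integrableOn a b σ2 β ha ha' hb hσ2 hβ0
  set f : ℝ → ℝ := fun t =>
    (2 * π * σ2 * t) ^ (-(1 / 2 : ℝ)) * Real.exp (-β ^ 2 / (2 * σ2 * t)) *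
      t ^ (a - 1) * (1 + t) ^ (-(a + b)) with hfdef
  -- pointwise lower bound on Ioc δ 1
  have hlow : ∀ t ∈ Ioc δ 1, K * t⁻¹ ≤ f t := by
    intro t ht
    obtain ⟨htδ, ht1⟩ := ht
    have ht0 : 0 < t := lt_trans hδ htδ
    have hexp : Real.exp (-(1/2:ℝ)) ≤ Real.exp (-β ^ 2 / (2 * σ2 * t)) := by
      apply Real.exp_le_exp.2
      rw [neg_div, neg_le_neg_iff]
      rw [div_le_iff₀ (by positivity)]
      nlinarith [mul_le_mul_of_nonneg_left htδ.le hσ2.le]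
    have hbase : (2:ℝ) ^ (-(a + b)) ≤ (1 + t) ^ (-(a + b)) :=
      Real.rpow_le_rpow_of_nonpos (by linarith) (by linarith) (by linarith)
    have hpow : t ^ (-1:ℝ) ≤ t ^ (a - 3/2) :=
      Real.rpow_le_rpow_of_exponent_ge ht0 ht1 (by linarith)
    calc K * t⁻¹
        = (2 * π * σ2) ^ (-(1 / 2 : ℝ)) *
            (t ^ (-1:ℝ) * (Real.exp (-(1/2:ℝ)) * (2:ℝ) ^ (-(a + b)))) := by
          rw [← Real.rpow_neg_one t]; ring
      _ ≤ (2 * π * σ2) ^ (-(1 / 2 : ℝ)) *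
            (t ^ (a - 3/2) * (Real.exp (-β ^ 2 / (2 * σ2 * t)) * (1 + t) ^ (-(a + b)))) := by
          gcongr <;> positivity
      _ = f t := by
          rw [hfdef]
          simp only
          rw [Real.mul_rpow (by positivity : (0:ℝ) ≤ 2 * π * σ2) ht0.le,
            show a - 3/2 = -(1/2:ℝ) + (a - 1) by ring, Real.rpow_add ht0]
          ring
  have hIoc : IntegrableOn f (Ioc δ 1) :=
    hInt.mono_set (fun x hx => lt_trans hδ hx.1)
  have hinv : IntegrableOn (fun t : ℝ => K * t⁻¹) (Ioc δ 1) := by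
    apply IntegrableOn.mono_set (t := Icc δ 1) ?_ Ioc_subset_Icc_self
    exact (continuousOn_const.mul (continuousOn_inv₀.mono
      (fun x hx => ne_of_gt (lt_of_lt_of_le hδ hx.1)))).integrableOn_compact isCompact_Icc
  have h1 : ∫ t in Ioc δ 1, K * t⁻¹ ≤ ∫ t in Ioc δ 1, f t :=
    setIntegral_mono_on hinv hIoc measurableSet_Ioc hlow
  have h2 : ∫ t in Ioc δ 1, f t ≤ ∫ t in Ioi 0, f t := by
    apply setIntegral_mono_set hInt
    · filter_upwards [ae_restrict_mem measurableSet_Ioi] with t ht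
      exact nbp_nonneg a b σ2 β hσ2 ht
    · exact HasSubset.Subset.eventuallyLE (fun x hx => lt_trans hδ hx.1)
  have h3 : ∫ t in Ioc δ 1, K * t⁻¹ = K * R := by
    rw [integral_const_mul, ← intervalIntegral.integral_of_le hδ1,
      integral_inv_of_pos hδ one_pos, one_div, Real.log_inv, hδdef, Real.log_exp, neg_neg]
  have hM : M ≤ C * (K * R) := by
    have h4 : M / (C * K) ≤ R := le_max_right _ _
    have := (div_le_iff₀ (by positivity : (0:ℝ) < C * K)).1 h4
    nlinarith
  calc M ≤ C * (K * R) := hM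
    _ = C * ∫ t in Ioc δ 1, K * t⁻¹ := by rw [h3]
    _ ≤ C * ∫ t in Ioi 0, f t := by
        apply mul_le_mul_of_nonneg_left (le_trans h1 h2) hC.le
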